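/- Any semi-unbounded fan-in circuit C of AND-depth d is equivalent to a semi-unbounded fan-in circuit C' of size at most 2^d · |C| and AND-depth d such that, for each n ≤ d, the union of the left-input subcircuits of the AND-gates of AND-depth n is disjoint from the union of their right-input subcircuits. -/

import Mathlib

/-- A gate of a semi-unbounded fan-in circuit with `m` gates over `n` variables: an input
gate holding a literal (negations occur only on inputs), an AND-gate of fan-in 2, or an
OR-gate of unbounded fan-in. -/
inductive SUGate (n m : ℕ) where
  | input : Fin n → Bool → SUGate n m
  | and : Fin m → Fin m → SUGate n m
  | or : Finset (Fin m) → SUGate n m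

/-- A semi-unbounded fan-in circuit: gates are `0, …, size − 1`, and every gate takes its
inputs from gates with smaller indices (acyclicity). -/
structure SUCircuit (n : ℕ) where
  size : ℕ
  gate : Fin size → SUGate n size
  out : Fin size
  wf_and : ∀ g a b, gate g = SUGate.and a b → a < g ∧ b < g
  wf_or : ∀ g S, gate g = SUGate.or S → ∀ h ∈ S, h < g

/-- A valuation of the gates consistent with the circuit semantics on input `α`. -/
def SUConsistent {n : ℕ} (C : SUCircuit n) (α : Fin n → Bool)
    (v : Fin C.size → Prop) : Prop :=
  ∀ g : Fin C.size,
    (∀ i b, C.gate g = SUGate.input i b → (v g ↔ α i = b)) ∧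
    (∀ a b, C.gate g = SUGate.and a b → (v g ↔ v a ∧ v b)) ∧
    (∀ S, C.gate g = SUGate.or S → (v g ↔ ∃ h ∈ S, v h))

/-- `SUWire C a g` holds if gate `a` is an input (wire) of gate `g`. -/
def SUWire {n : ℕ} (C : SUCircuit n) (a g : Fin C.size) : Prop :=
  (∃ b, C.gate g = SUGate.and a b ∨ C.gate g = SUGate.and b a) ∨
  (∃ S, C.gate g = SUGate.or S ∧ a ∈ S)

/-- `D` assigns to each gate its AND-depth: the maximal number of AND-gates on a path from
an input to the gate. -/
def IsANDdepth {n : ℕ} (C : SUCircuit n) (D : Fin C.size → ℕ) : Prop :=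
  ∀ g : Fin C.size,
    (∀ i b, C.gate g = SUGate.input i b → D g = 0) ∧
    (∀ a b, C.gate g = SUGate.and a b → D g = max (D a) (D b) + 1) ∧
    (∀ S, C.gate g = SUGate.or S → D g = S.sup D)

namespace Stmt9


def enc {N d : ℕ} (g : Fin N) (t : Fin (2^d)) : Fin (N * 2^d) :=
  ⟨g.1 * 2^d + t.1, by
    have h2 := t.isLt
    have h1 : g.1 + 1 ≤ N := g.isLt
    have h3 : (g.1 + 1) * 2^d ≤ N * 2^d := Nat.mul_le_mul_right _ h1
    nlinarith⟩

def dec1 {N d : ℕ} (i : Fin (N * 2^d)) : Fin N :=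
  ⟨i.1 / 2^d, (Nat.div_lt_iff_lt_mul (Nat.two_pow_pos d)).2 i.isLt⟩

def dec2 {N d : ℕ} (i : Fin (N * 2^d)) : Fin (2^d) :=
  ⟨i.1 % 2^d, Nat.mod_lt _ (Nat.two_pow_pos d)⟩

@[simp] lemma dec1_enc {N d : ℕ} (g : Fin N) (t : Fin (2^d)) : dec1 (enc g t) = g := by
  apply Fin.ext
  simp only [dec1, enc]
  rw [Nat.mul_comm, Nat.mul_add_div (Nat.two_pow_pos d), Nat.div_eq_of_lt t.isLt, Nat.add_zero]

@[simp] lemma dec2_enc {N d : ℕ} (g : Fin N) (t : Fin (2^d)) : dec2 (enc g t) = t := by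
  apply Fin.ext
  simp only [dec2, enc]
  rw [Nat.add_comm, Nat.add_mul_mod_self_right, Nat.mod_eq_of_lt t.isLt]

lemma enc_dec {N d : ℕ} (i : Fin (N * 2^d)) : enc (dec1 i) (dec2 i) = i := by
  apply Fin.ext
  simp only [enc, dec1, dec2]
  rw [Nat.mul_comm]
  exact Nat.div_add_mod _ _

lemma enc_lt_enc {N d : ℕ} {a g : Fin N} (h : a < g) (t1 t2 : Fin (2^d)) :
    enc a t1 < enc g t2 := by
  have h1 : (a.1 + 1) * 2^d ≤ g.1 * 2^d := Nat.mul_le_mul_right _ h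
  have h2 := t1.isLt
  show a.1 * 2^d + t1.1 < g.1 * 2^d + t2.1
  nlinarith

def slot {d : ℕ} (t : Fin (2^d)) (j : ℕ) : Bool :=
  if h : j < d then finTwoEquiv (finFunctionFinEquiv.symm t ⟨j, h⟩) else false

def updAt {d : ℕ} (t : Fin (2^d)) (j : ℕ) (b : Bool) : Fin (2^d) :=
  finFunctionFinEquiv (fun k => if k.1 = j then finTwoEquiv.symm b else finFunctionFinEquiv.symm t k)

lemma slot_updAt_ne {d : ℕ} (t : Fin (2^d)) {j j' : ℕ} (h : j' ≠ j) (b : Bool) :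
    slot (updAt t j b) j' = slot t j' := by
  unfold slot updAt
  split
  · simp [h]
  · rfl

lemma slot_updAt_self {d : ℕ} (t : Fin (2^d)) {j : ℕ} (h : j < d) (b : Bool) :
    slot (updAt t j b) j = b := by
  unfold slot updAt
  simp [h]

variable {n : ℕ}

def gmap {N : ℕ} (d : ℕ) (t : Fin (2^d)) (m : ℕ) : SUGate n N → SUGate n (N * 2^d)
  | .input v b => .input v b
  | .and a b => .and (enc a (updAt t (m-1) false)) (enc b (updAt t (m-1) true))
  | .or S => .or (S.image fun h => enc h t)

@[reducible] def big (C : SUCircuit n) (D : Fin C.size → ℕ) (d : ℕ) : SUCircuit n where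
  size := C.size * 2^d
  gate i := gmap d (dec2 i) (D (dec1 i)) (C.gate (dec1 i))
  out := enc C.out ⟨0, Nat.two_pow_pos d⟩
  wf_and := by
    intro g a b h
    rcases hC : C.gate (dec1 g) with _ | ⟨x, y⟩ | S
    · rw [hC] at h; simp [gmap] at h
    · rw [hC] at h; simp only [gmap, SUGate.and.injEq] at h
      obtain ⟨ha, hb⟩ := h
      have hxy := C.wf_and _ _ _ hC
      constructor
      · rw [← ha]; conv_rhs => rw [← enc_dec g]
        exact enc_lt_enc hxy.1 _ _
      · rw [← hb]; conv_rhs => rw [← enc_dec g]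
        exact enc_lt_enc hxy.2 _ _
    · rw [hC] at h; simp [gmap] at h
  wf_or := by
    intro g S h x hx
    rcases hC : C.gate (dec1 g) with _ | ⟨a, b⟩ | S0
    · rw [hC] at h; simp [gmap] at h
    · rw [hC] at h; simp [gmap] at h
    · rw [hC] at h; simp only [gmap, SUGate.or.injEq] at h
      subst h
      obtain ⟨h0, hmem, rfl⟩ := Finset.mem_image.1 hx
      conv_rhs => rw [← enc_dec g]
      exact enc_lt_enc (C.wf_or _ _ hC h0 hmem) _ _

@[simp] lemma big_gate (C : SUCircuit n) (D : Fin C.size → ℕ) (d : ℕ)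
    (i : Fin (C.size * 2^d)) :
    (big C D d).gate i = gmap d (dec2 i) (D (dec1 i)) (C.gate (dec1 i)) := rfl


lemma key {C : SUCircuit n} {D : Fin C.size → ℕ} {d : ℕ} {α : Fin n → Bool}
    {v : Fin C.size → Prop} {v' : Fin ((big C D d).size) → Prop}
    (hv : SUConsistent C α v) (hv' : SUConsistent (big C D d) α v') :
    ∀ (g : Fin C.size) (t : Fin (2^d)), (v' (enc g t) ↔ v g) := by
  have main : ∀ k (g : Fin C.size), g.1 < k → ∀ t, (v' (enc g t) ↔ v g) := by
    intro k
    induction k with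
    | zero => intro g hg; exact absurd hg (Nat.not_lt_zero _)
    | succ k ih =>
      intro g hg t
      rcases hC : C.gate g with ⟨i, b⟩ | ⟨a, b⟩ | S
      · have h1 := (hv g).1 i b hC
        have h2 := (hv' (enc g t)).1 i b
          (by simp [big_gate, dec1_enc, dec2_enc, hC, gmap])
        exact h2.trans h1.symm
      · have hab := C.wf_and _ _ _ hC
        have ha := Fin.lt_def.1 hab.1
        have hb := Fin.lt_def.1 hab.2
        have h1 := (hv g).2.1 a b hC
        have h2 := (hv' (enc g t)).2.1 (enc a (updAt t (D g - 1) false))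
          (enc b (updAt t (D g - 1) true))
          (by simp [big_gate, dec1_enc, dec2_enc, hC, gmap])
        rw [h2, h1, ih a (by omega) _, ih b (by omega) _]
      · have h1 := (hv g).2.2 S hC
        have h2 := (hv' (enc g t)).2.2 (S.image fun h => enc h t)
          (by simp [big_gate, dec1_enc, dec2_enc, hC, gmap])
        rw [h2, h1]
        constructor
        · rintro ⟨h', hh', hvh⟩
          obtain ⟨h0, hmem, rfl⟩ := Finset.mem_image.1 hh'
          have hlt := Fin.lt_def.1 (C.wf_or _ _ hC h0 hmem)
          exact ⟨h0, hmem, (ih h0 (by omega) t).1 hvh⟩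
        · rintro ⟨h0, hmem, hvh⟩
          have hlt := Fin.lt_def.1 (C.wf_or _ _ hC h0 hmem)
          exact ⟨enc h0 t, Finset.mem_image_of_mem _ hmem, (ih h0 (by omega) t).2 hvh⟩
  exact fun g t => main (g.1 + 1) g (Nat.lt_succ_self _) t

lemma big_depth {C : SUCircuit n} {D : Fin C.size → ℕ} (hD : IsANDdepth C D) (d : ℕ) :
    IsANDdepth (big C D d) (fun i => D (dec1 i)) := by
  intro i
  refine ⟨?_, ?_, ?_⟩
  · intro v b h
    rcases hC : C.gate (dec1 i) with ⟨v0, b0⟩ | ⟨a0, b0⟩ | S0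
    · exact (hD _).1 _ _ hC
    · rw [big_gate, hC] at h; simp [gmap] at h
    · rw [big_gate, hC] at h; simp [gmap] at h
  · intro a b h
    rcases hC : C.gate (dec1 i) with ⟨v0, b0⟩ | ⟨a0, b0⟩ | S0
    · rw [big_gate, hC] at h; simp [gmap] at h
    · rw [big_gate, hC] at h; simp only [gmap, SUGate.and.injEq] at h
      obtain ⟨ha, hb⟩ := h
      rw [← ha, ← hb]
      simp only [dec1_enc]
      exact (hD _).2.1 _ _ hC
    · rw [big_gate, hC] at h; simp [gmap] at h
  · intro S h
    rcases hC : C.gate (dec1 i) with ⟨v0, b0⟩ | ⟨a0, b0⟩ | S0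
    · rw [big_gate, hC] at h; simp [gmap] at h
    · rw [big_gate, hC] at h; simp [gmap] at h
    · rw [big_gate, hC] at h; simp only [gmap, SUGate.or.injEq] at h
      dsimp only
      rw [← h, Finset.sup_image, (hD _).2.2 _ hC]
      apply Finset.sup_congr rfl
      intro x _
      simp [Function.comp, dec1_enc]

lemma wire_slot {C : SUCircuit n} {D : Fin C.size → ℕ} {d : ℕ} (hD : IsANDdepth C D)
    {x y : Fin ((big C D d).size)} (h : SUWire (big C D d) x y) :
    D (dec1 x) ≤ D (dec1 y) ∧
      ∀ j, D (dec1 y) ≤ j → slot (dec2 x) j = slot (dec2 y) j := by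
  rcases h with ⟨b', hb' | hb'⟩ | ⟨S, hS, hmem⟩
  · rcases hC : C.gate (dec1 y) with ⟨v0, b0⟩ | ⟨a0, b0⟩ | S0
    · rw [big_gate, hC] at hb'; simp [gmap] at hb'
    · rw [big_gate, hC] at hb'; simp only [gmap, SUGate.and.injEq] at hb'
      obtain ⟨h1, _⟩ := hb'
      have hdep := (hD _).2.1 _ _ hC
      subst h1
      refine ⟨by simp only [dec1_enc]; omega, fun j hj => ?_⟩
      simp only [dec2_enc]
      exact slot_updAt_ne _ (by omega) _
    · rw [big_gate, hC] at hb'; simp [gmap] at hb'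
  · rcases hC : C.gate (dec1 y) with ⟨v0, b0⟩ | ⟨a0, b0⟩ | S0
    · rw [big_gate, hC] at hb'; simp [gmap] at hb'
    · rw [big_gate, hC] at hb'; simp only [gmap, SUGate.and.injEq] at hb'
      obtain ⟨_, h2⟩ := hb'
      have hdep := (hD _).2.1 _ _ hC
      subst h2
      refine ⟨by simp only [dec1_enc]; omega, fun j hj => ?_⟩
      simp only [dec2_enc]
      exact slot_updAt_ne _ (by omega) _
    · rw [big_gate, hC] at hb'; simp [gmap] at hb'
  · rcases hC : C.gate (dec1 y) with ⟨v0, b0⟩ | ⟨a0, b0⟩ | S0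
    · rw [big_gate, hC] at hS; simp [gmap] at hS
    · rw [big_gate, hC] at hS; simp [gmap] at hS
    · rw [big_gate, hC] at hS; simp only [gmap, SUGate.or.injEq] at hS
      rw [← hS] at hmem
      obtain ⟨h0, hmem0, rfl⟩ := Finset.mem_image.1 hmem
      have hdep := (hD _).2.2 _ hC
      refine ⟨?_, fun j hj => by simp only [dec2_enc]⟩
      simp only [dec1_enc]
      rw [hdep]
      exact Finset.le_sup hmem0

lemma path_slot {C : SUCircuit n} {D : Fin C.size → ℕ} {d : ℕ} (hD : IsANDdepth C D)
    {x a : Fin ((big C D d).size)}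
    (h : Relation.ReflTransGen (SUWire (big C D d)) x a) :
    D (dec1 x) ≤ D (dec1 a) ∧
      ∀ j, D (dec1 a) ≤ j → slot (dec2 x) j = slot (dec2 a) j := by
  induction h with
  | refl => exact ⟨le_refl _, fun j _ => rfl⟩
  | tail hxb hbc ih =>
    have hw := wire_slot hD hbc
    exact ⟨ih.1.trans hw.1,
      fun j hj => (ih.2 j (hw.1.trans hj)).trans (hw.2 j hj)⟩

end Stmt9

/-- Any semi-unbounded fan-in circuit `C` of AND-depth `d` is equivalent to a
semi-unbounded fan-in circuit `C'` of size at most `2^d · |C|` and AND-depth `d` such that,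
for each `m ≤ d`, the union of the left-input subcircuits of the AND-gates of AND-depth `m`
is disjoint from the union of their right-input subcircuits. -/
theorem stmt_9 {n d : ℕ} (C : SUCircuit n) (D : Fin C.size → ℕ)
    (hD : IsANDdepth C D) (hd : ∀ g, D g ≤ d) :
    ∃ (C' : SUCircuit n) (D' : Fin C'.size → ℕ),
      (∀ (α : Fin n → Bool) (v : Fin C.size → Prop) (v' : Fin C'.size → Prop),
        SUConsistent C α v → SUConsistent C' α v' → (v C.out ↔ v' C'.out)) ∧
      C'.size ≤ 2 ^ d * C.size ∧
      IsANDdepth C' D' ∧ (∀ g, D' g ≤ d) ∧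
      (∀ m ≤ d, ∀ x : Fin C'.size,
        ¬ ((∃ g a b, C'.gate g = SUGate.and a b ∧ D' g = m ∧
              Relation.ReflTransGen (SUWire C') x a) ∧
           (∃ g a b, C'.gate g = SUGate.and a b ∧ D' g = m ∧
              Relation.ReflTransGen (SUWire C') x b))) := by
  classical
  refine ⟨Stmt9.big C D d, fun i => D (Stmt9.dec1 i), ?_, ?_, Stmt9.big_depth hD d,
    fun i => hd _, ?_⟩
  · intro α v v' hv hv'
    exact (Stmt9.key hv hv' C.out _).symm
  · exact Nat.le_of_eq (Nat.mul_comm _ _)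
  · rintro m hm x ⟨⟨g1, a1, b1, hg1, hm1, hp1⟩, g2, a2, b2, hg2, hm2, hp2⟩
    have hval : ∀ (g a b : Fin (Stmt9.big C D d).size),
        (Stmt9.big C D d).gate g = SUGate.and a b → D (Stmt9.dec1 g) = m →
        ∀ z, Relation.ReflTransGen (SUWire (Stmt9.big C D d)) z a →
          Stmt9.slot (Stmt9.dec2 z) (m - 1) = false := by
      intro g a b hg hmg z hz
      rcases hC : C.gate (Stmt9.dec1 g) with ⟨v0, b0⟩ | ⟨x1, y1⟩ | S0
      · rw [Stmt9.big_gate, hC] at hg; simp [Stmt9.gmap] at hg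
      · rw [Stmt9.big_gate, hC] at hg
        simp only [Stmt9.gmap, SUGate.and.injEq] at hg
        obtain ⟨h1, _⟩ := hg
        have hdep := (hD _).2.1 _ _ hC
        have hP := Stmt9.path_slot hD hz
        rw [← h1] at hP
        simp only [Stmt9.dec1_enc, Stmt9.dec2_enc] at hP
        rw [hmg] at hdep
        have hm1d : m - 1 < d := by omega
        have heq := hP.2 (m - 1) (by omega)
        rw [heq, hmg, Stmt9.slot_updAt_self _ hm1d]
      · rw [Stmt9.big_gate, hC] at hg; simp [Stmt9.gmap] at hg
    have hvalr : ∀ (g a b : Fin (Stmt9.big C D d).size),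
        (Stmt9.big C D d).gate g = SUGate.and a b → D (Stmt9.dec1 g) = m →
        ∀ z, Relation.ReflTransGen (SUWire (Stmt9.big C D d)) z b →
          Stmt9.slot (Stmt9.dec2 z) (m - 1) = true := by
      intro g a b hg hmg z hz
      rcases hC : C.gate (Stmt9.dec1 g) with ⟨v0, b0⟩ | ⟨x1, y1⟩ | S0
      · rw [Stmt9.big_gate, hC] at hg; simp [Stmt9.gmap] at hg
      · rw [Stmt9.big_gate, hC] at hg
        simp only [Stmt9.gmap, SUGate.and.injEq] at hg
        obtain ⟨_, h2⟩ := hg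
        have hdep := (hD _).2.1 _ _ hC
        have hP := Stmt9.path_slot hD hz
        rw [← h2] at hP
        simp only [Stmt9.dec1_enc, Stmt9.dec2_enc] at hP
        rw [hmg] at hdep
        have hm1d : m - 1 < d := by omega
        have heq := hP.2 (m - 1) (by omega)
        rw [heq, hmg, Stmt9.slot_updAt_self _ hm1d]
      · rw [Stmt9.big_gate, hC] at hg; simp [Stmt9.gmap] at hg
    have hf := hval g1 a1 b1 hg1 hm1 x hp1
    have ht := hvalr g2 a2 b2 hg2 hm2 x hp2
    rw [hf] at ht
    exact Bool.noConfusion ht
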